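/- In BV̂, the elements v_n, π_n, π̄_n satisfy the following relations (for ε = ±1): (R1) v_q v_m = v_m v_{q+1} for m < q; (R2) π_q v_m = v_m π_{q+1} for m < q; (R3) π_m^ε v_m = v_{m+1} π_m^ε π_{m+1}^ε for m ≥ 0; (R4) π_q v_m = v_m π_q for m > q+1; (R5) π̄_q v_m = v_m π̄_{q+1} for m < q; (R6) π̄_m^ε v_m = π_m^ε π̄_{m+1}^ε for m ≥ 0; (R7) π_q π_m = π_m π_q for |m−q| ≥ 2; (R8) π_m π_{m+1} π_m = π_{m+1} π_m π_{m+1} for m ≥ 0; (R9) π̄_q π_m = π_m π̄_q for q ≥ m+2; (R10) π_m π̄_{m+1} π_m = π̄_{m+1} π_m π̄_{m+1} for m ≥ 0. -/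

import Mathlib

namespace BrinStmt3

/-- The free-group generators for the infinite presentation of `BVhat`:
`Sum.inl i` is the generator `λ_i` and `Sum.inr i` is the generator `σ_i`. -/
def lamF (i : ℕ) : FreeGroup (ℕ ⊕ ℕ) := FreeGroup.of (Sum.inl i)
def sigF (i : ℕ) : FreeGroup (ℕ ⊕ ℕ) := FreeGroup.of (Sum.inr i)

/-- The relators of the infinite presentation of the group `BV̂`. -/
def bvhatRels : Set (FreeGroup (ℕ ⊕ ℕ)) :=
  { r | (∃ m q : ℕ, m < q ∧ r = lamF q * lamF m * (lamF m * lamF (q+1))⁻¹) ∨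
        (∃ m n : ℕ, (m + 2 ≤ n ∨ n + 2 ≤ m) ∧
            r = sigF m * sigF n * (sigF n * sigF m)⁻¹) ∨
        (∃ m : ℕ, r = sigF m * sigF (m+1) * sigF m *
            (sigF (m+1) * sigF m * sigF (m+1))⁻¹) ∨
        (∃ (m q : ℕ) (e : ℤ), (e = 1 ∨ e = -1) ∧ m < q ∧
            r = (sigF q) ^ e * lamF m * (lamF m * (sigF (q+1)) ^ e)⁻¹) ∨
        (∃ (m : ℕ) (e : ℤ), (e = 1 ∨ e = -1) ∧
            r = (sigF m) ^ e * lamF m *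
              (lamF (m+1) * (sigF m) ^ e * (sigF (m+1)) ^ e)⁻¹) ∨
        (∃ (m : ℕ) (e : ℤ), (e = 1 ∨ e = -1) ∧
            r = (sigF m) ^ e * lamF (m+1) *
              (lamF m * (sigF (m+1)) ^ e * (sigF m) ^ e)⁻¹) ∨
        (∃ (m q : ℕ) (e : ℤ), (e = 1 ∨ e = -1) ∧ q + 1 < m ∧
            r = (sigF q) ^ e * lamF m * (lamF m * (sigF q) ^ e)⁻¹) }

/-- The group `BV̂`, given by its infinite presentation. -/
abbrev BVhat := PresentedGroup bvhatRels

/-- The generator `λ_i` of `BV̂`. -/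
def lamB (i : ℕ) : BVhat := PresentedGroup.of (Sum.inl i)
/-- The generator `σ_i` of `BV̂`. -/
def sigB (i : ℕ) : BVhat := PresentedGroup.of (Sum.inr i)

/-- The element `v_n = λ_0^{n+1} λ_1 λ_0^{-n-2}` of `BV̂`. -/
def vB (n : ℕ) : BVhat := lamB 0 ^ (n+1) * lamB 1 * lamB 0 ^ (-((n : ℤ) + 2))
/-- The element `π_n = λ_0^{n+2} σ_1 λ_0^{-n-2}` of `BV̂`. -/
def piB (n : ℕ) : BVhat := lamB 0 ^ (n+2) * sigB 1 * lamB 0 ^ (-((n : ℤ) + 2))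
/-- The element `π̄_n = λ_0^{n+1} σ_0 λ_0^{-n-1}` of `BV̂`. -/
def opiB (n : ℕ) : BVhat := lamB 0 ^ (n+1) * sigB 0 * lamB 0 ^ (-((n : ℤ) + 1))

/-- Lemma (relations in `BV̂`): the elements `v_n`, `π_n`, `π̄_n` of `BV̂`
satisfy relations (R1)–(R10). -/
-- base relations
private lemma relB {r : FreeGroup (ℕ ⊕ ℕ)} (hr : r ∈ bvhatRels) :
    (QuotientGroup.mk r : BVhat) = 1 :=
  (QuotientGroup.eq_one_iff r).mpr (Subgroup.subset_normalClosure hr)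

private lemma mk_lam (i : ℕ) : (QuotientGroup.mk (lamF i) : BVhat) = lamB i := rfl
private lemma mk_sig (i : ℕ) : (QuotientGroup.mk (sigF i) : BVhat) = sigB i := rfl

private lemma rel1 {m q r : ℕ} (h : m < q) (hr : r = q + 1) :
    lamB q * lamB m = lamB m * lamB r := by
  subst hr
  have h1 := relB (Or.inl ⟨m, q, h, rfl⟩)
  simp only [QuotientGroup.mk_mul, QuotientGroup.mk_inv, mk_lam, mul_inv_eq_one] at h1
  exact h1

private lemma rel2 {m n : ℕ} (h : m + 2 ≤ n ∨ n + 2 ≤ m) :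
    sigB m * sigB n = sigB n * sigB m := by
  have h1 := relB (Or.inr (Or.inl ⟨m, n, h, rfl⟩))
  simp only [QuotientGroup.mk_mul, QuotientGroup.mk_inv, mk_sig, mul_inv_eq_one] at h1
  exact h1

private lemma rel3 {m n : ℕ} (hn : n = m + 1) :
    sigB m * sigB n * sigB m = sigB n * sigB m * sigB n := by
  subst hn
  have h1 := relB (Or.inr (Or.inr (Or.inl ⟨m, rfl⟩)))
  simp only [QuotientGroup.mk_mul, QuotientGroup.mk_inv, mk_sig, mul_inv_eq_one] at h1
  exact h1

private lemma rel4 (e : ℤ) {m q r : ℕ} (he : e = 1 ∨ e = -1) (h : m < q) (hr : r = q + 1) :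
    sigB q ^ e * lamB m = lamB m * sigB r ^ e := by
  subst hr
  have h1 := relB (Or.inr (Or.inr (Or.inr (Or.inl ⟨m, q, e, he, h, rfl⟩))))
  simp only [QuotientGroup.mk_mul, QuotientGroup.mk_inv, QuotientGroup.mk_zpow, mk_lam, mk_sig,
    mul_inv_eq_one] at h1
  exact h1

private lemma rel6 (e : ℤ) {m n : ℕ} (he : e = 1 ∨ e = -1) (hn : n = m + 1) :
    sigB m ^ e * lamB n = lamB m * sigB n ^ e * sigB m ^ e := by
  subst hn
  have h1 := relB (Or.inr (Or.inr (Or.inr (Or.inr (Or.inr (Or.inl ⟨m, e, he, rfl⟩))))))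
  simp only [QuotientGroup.mk_mul, QuotientGroup.mk_inv, QuotientGroup.mk_zpow, mk_lam, mk_sig,
    mul_inv_eq_one] at h1
  exact h1

private lemma rel7 (e : ℤ) {m q : ℕ} (he : e = 1 ∨ e = -1) (h : q + 1 < m) :
    sigB q ^ e * lamB m = lamB m * sigB q ^ e := by
  have h1 := relB (Or.inr (Or.inr (Or.inr (Or.inr (Or.inr (Or.inr ⟨m, q, e, he, h, rfl⟩))))))
  simp only [QuotientGroup.mk_mul, QuotientGroup.mk_inv, QuotientGroup.mk_zpow, mk_lam, mk_sig,
    mul_inv_eq_one] at h1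
  exact h1

private lemma rel4₁ {m q r : ℕ} (h : m < q) (hr : r = q + 1) :
    sigB q * lamB m = lamB m * sigB r := by
  simpa using rel4 1 (Or.inl rfl) h hr

private lemma rel7₁ {m q : ℕ} (h : q + 1 < m) :
    sigB q * lamB m = lamB m * sigB q := by
  simpa using rel7 1 (Or.inl rfl) h

-- shift lemmas: moving powers of lamB 0 past generators
private lemma lam_shift {q r : ℕ} (j : ℕ) (hq : 1 ≤ q) (hr : q + j = r) :
    lamB q * lamB 0 ^ j = lamB 0 ^ j * lamB r := by
  induction j generalizing q r with
  | zero => subst hr; simp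
  | succ j ih =>
    have h0 : lamB q * lamB 0 = lamB 0 * lamB (q+1) := rel1 hq rfl
    calc lamB q * lamB 0 ^ (j+1) = (lamB q * lamB 0) * lamB 0 ^ j := by
          rw [pow_succ']; group
      _ = lamB 0 * (lamB (q+1) * lamB 0 ^ j) := by rw [h0]; group
      _ = lamB 0 * (lamB 0 ^ j * lamB r) := by rw [ih (r := r) (by omega) (by omega)]
      _ = lamB 0 ^ (j+1) * lamB r := by rw [pow_succ']; group

private lemma lam_shift' {q r : ℕ} (j : ℕ) (hq : 1 ≤ q) (hr : q + j = r) :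
    (lamB 0 ^ j)⁻¹ * lamB q = lamB r * (lamB 0 ^ j)⁻¹ := by
  have h := lam_shift j hq hr
  calc (lamB 0 ^ j)⁻¹ * lamB q = (lamB 0 ^ j)⁻¹ * (lamB q * lamB 0 ^ j) * (lamB 0 ^ j)⁻¹ := by
        group
    _ = (lamB 0 ^ j)⁻¹ * (lamB 0 ^ j * lamB r) * (lamB 0 ^ j)⁻¹ := by rw [h]
    _ = lamB r * (lamB 0 ^ j)⁻¹ := by group

private lemma sig_shift (e : ℤ) {q r : ℕ} (j : ℕ) (he : e = 1 ∨ e = -1) (hq : 1 ≤ q)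
    (hr : q + j = r) : sigB q ^ e * lamB 0 ^ j = lamB 0 ^ j * sigB r ^ e := by
  induction j generalizing q r with
  | zero => subst hr; simp
  | succ j ih =>
    have h0 : sigB q ^ e * lamB 0 = lamB 0 * sigB (q+1) ^ e := rel4 e he hq rfl
    calc sigB q ^ e * lamB 0 ^ (j+1) = (sigB q ^ e * lamB 0) * lamB 0 ^ j := by
          rw [pow_succ']; group
      _ = lamB 0 * (sigB (q+1) ^ e * lamB 0 ^ j) := by rw [h0]; group
      _ = lamB 0 * (lamB 0 ^ j * sigB r ^ e) := by rw [ih (r := r) (by omega) (by omega)]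
      _ = lamB 0 ^ (j+1) * sigB r ^ e := by rw [pow_succ']; group

private lemma sig_shift' (e : ℤ) {q r : ℕ} (j : ℕ) (he : e = 1 ∨ e = -1) (hq : 1 ≤ q)
    (hr : q + j = r) : (lamB 0 ^ j)⁻¹ * sigB q ^ e = sigB r ^ e * (lamB 0 ^ j)⁻¹ := by
  have h := sig_shift e j he hq hr
  calc (lamB 0 ^ j)⁻¹ * sigB q ^ e
      = (lamB 0 ^ j)⁻¹ * (sigB q ^ e * lamB 0 ^ j) * (lamB 0 ^ j)⁻¹ := by group
    _ = (lamB 0 ^ j)⁻¹ * (lamB 0 ^ j * sigB r ^ e) * (lamB 0 ^ j)⁻¹ := by rw [h]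
    _ = sigB r ^ e * (lamB 0 ^ j)⁻¹ := by group

private lemma sig_shift₁ {q r : ℕ} (j : ℕ) (hq : 1 ≤ q) (hr : q + j = r) :
    sigB q * lamB 0 ^ j = lamB 0 ^ j * sigB r := by
  simpa using sig_shift 1 j (Or.inl rfl) hq hr

private lemma sig_shift₁' {q r : ℕ} (j : ℕ) (hq : 1 ≤ q) (hr : q + j = r) :
    (lamB 0 ^ j)⁻¹ * sigB q = sigB r * (lamB 0 ^ j)⁻¹ := by
  simpa using sig_shift' 1 j (Or.inl rfl) hq hr

-- conjugation normal forms
private lemma lzpow (n c : ℕ) : lamB 0 ^ (-((n:ℤ) + c)) = (lamB 0 ^ (n + c))⁻¹ := by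
  rw [show -((n:ℤ) + c) = -(((n + c : ℕ) : ℤ)) by push_cast; ring, zpow_neg, zpow_natCast]

private lemma vB_eq (n : ℕ) : vB n = lamB 0 ^ (n+1) * lamB 1 * (lamB 0 ^ (n+2))⁻¹ := by
  rw [vB, show ((2:ℤ)) = ((2:ℕ):ℤ) by norm_num, lzpow]

private lemma piB_eq (n : ℕ) : piB n = lamB 0 ^ (n+2) * sigB 1 * (lamB 0 ^ (n+2))⁻¹ := by
  rw [piB, show ((2:ℤ)) = ((2:ℕ):ℤ) by norm_num, lzpow]

private lemma opiB_eq (n : ℕ) : opiB n = lamB 0 ^ (n+1) * sigB 0 * (lamB 0 ^ (n+1))⁻¹ := by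
  rw [opiB, show ((1:ℤ)) = ((1:ℕ):ℤ) by norm_num, lzpow]

private lemma piB_zpow (n : ℕ) (e : ℤ) :
    piB n ^ e = lamB 0 ^ (n+2) * sigB 1 ^ e * (lamB 0 ^ (n+2))⁻¹ := by
  rw [piB_eq, conj_zpow]

private lemma opiB_zpow (n : ℕ) (e : ℤ) :
    opiB n ^ e = lamB 0 ^ (n+1) * sigB 0 ^ e * (lamB 0 ^ (n+1))⁻¹ := by
  rw [opiB_eq, conj_zpow]
private lemma R1 (m k : ℕ) : vB (m+k+1) * vB m = vB m * vB (m+k+1+1) := by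
  calc vB (m+k+1) * vB m
      = lamB 0^(m+k+2) * (lamB 1 * ((lamB 0^(k+2))⁻¹ * lamB 1)) * (lamB 0^(m+2))⁻¹ := by
        simp only [vB_eq]; group
    _ = lamB 0^(m+k+2) * ((lamB 1 * lamB (k+3)) * (lamB 0^(k+2))⁻¹) * (lamB 0^(m+2))⁻¹ := by
        rw [lam_shift' (q:=1) (r:=k+3) (k+2) (by omega) (by omega)]; all_goals group
    _ = lamB 0^(m+k+2) * ((lamB (k+2) * lamB 1) * (lamB 0^(k+2))⁻¹) * (lamB 0^(m+2))⁻¹ := by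
        rw [rel1 (m:=1) (q:=k+2) (r:=k+3) (by omega) (by omega)]; all_goals group
    _ = lamB 0^(m+1) * ((lamB 1 * lamB 0^(k+1)) * lamB 1) * (lamB 0^(m+k+4))⁻¹ := by
        rw [lam_shift (q:=1) (r:=k+2) (k+1) (by omega) (by omega)]; all_goals group
    _ = vB m * vB (m+k+1+1) := by simp only [vB_eq]; group

private lemma R2 (m k : ℕ) : piB (m+k+1) * vB m = vB m * piB (m+k+1+1) := by
  calc piB (m+k+1) * vB m
      = lamB 0^(m+k+3) * (sigB 1 * ((lamB 0^(k+2))⁻¹ * lamB 1)) * (lamB 0^(m+2))⁻¹ := by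
        simp only [piB_eq, vB_eq]; group
    _ = lamB 0^(m+k+3) * ((sigB 1 * lamB (k+3)) * (lamB 0^(k+2))⁻¹) * (lamB 0^(m+2))⁻¹ := by
        rw [lam_shift' (q:=1) (r:=k+3) (k+2) (by omega) (by omega)]; all_goals group
    _ = lamB 0^(m+k+3) * ((lamB (k+3) * sigB 1) * (lamB 0^(k+2))⁻¹) * (lamB 0^(m+2))⁻¹ := by
        rw [rel7₁ (q:=1) (m:=k+3) (by omega)]; all_goals group
    _ = lamB 0^(m+1) * ((lamB 1 * lamB 0^(k+2)) * sigB 1) * (lamB 0^(m+k+4))⁻¹ := by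
        rw [lam_shift (q:=1) (r:=k+3) (k+2) (by omega) (by omega)]; all_goals group
    _ = vB m * piB (m+k+1+1) := by simp only [piB_eq, vB_eq]; group

private lemma R3 (m : ℕ) (e : ℤ) (he : e = 1 ∨ e = -1) :
    piB m ^ e * vB m = vB (m+1) * piB m ^ e * piB (m+1) ^ e := by
  calc piB m ^ e * vB m
      = lamB 0^(m+2) * (sigB 1 ^ e * ((lamB 0^1)⁻¹ * lamB 1)) * (lamB 0^(m+2))⁻¹ := by
        simp only [piB_zpow, vB_eq]; group
    _ = lamB 0^(m+2) * ((sigB 1 ^ e * lamB 2) * (lamB 0^1)⁻¹) * (lamB 0^(m+2))⁻¹ := by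
        rw [lam_shift' (q:=1) (r:=2) 1 (by omega) (by omega)]; all_goals group
    _ = lamB 0^(m+2) * ((lamB 1 * sigB 2 ^ e * sigB 1 ^ e) * (lamB 0^1)⁻¹) * (lamB 0^(m+2))⁻¹ := by
        rw [rel6 e (m:=1) (n:=2) he (by omega)]; all_goals group
    _ = lamB 0^(m+2) * (lamB 1 * (((lamB 0^1)⁻¹ * sigB 1 ^ e) * lamB 0^1) * sigB 1 ^ e) *
          (lamB 0^(m+3))⁻¹ := by
        rw [sig_shift' e (q:=1) (r:=2) 1 he (by omega) (by omega)]; all_goals group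
    _ = vB (m+1) * piB m ^ e * piB (m+1) ^ e := by simp only [piB_zpow, vB_eq]; group

private lemma R4 (q k : ℕ) : piB q * vB (q+k+2) = vB (q+k+2) * piB q := by
  calc piB q * vB (q+k+2)
      = lamB 0^(q+2) * (((sigB 1 * lamB 0^(k+1)) * lamB 1)) * (lamB 0^(q+k+4))⁻¹ := by
        simp only [piB_eq, vB_eq]; group
    _ = lamB 0^(q+2) * (lamB 0^(k+1) * (sigB (k+2) * lamB 1)) * (lamB 0^(q+k+4))⁻¹ := by
        rw [sig_shift₁ (q:=1) (r:=k+2) (k+1) (by omega) (by omega)]; all_goals group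
    _ = lamB 0^(q+k+3) * (lamB 1 * sigB (k+3)) * (lamB 0^(q+k+4))⁻¹ := by
        rw [rel4₁ (m:=1) (q:=k+2) (r:=k+3) (by omega) (by omega)]; all_goals group
    _ = lamB 0^(q+k+3) * (lamB 1 * (((lamB 0^(k+2))⁻¹ * sigB 1) * lamB 0^(k+2))) *
          (lamB 0^(q+k+4))⁻¹ := by
        rw [sig_shift₁' (q:=1) (r:=k+3) (k+2) (by omega) (by omega)]; all_goals group
    _ = vB (q+k+2) * piB q := by simp only [piB_eq, vB_eq]; group

private lemma R5 (m k : ℕ) : opiB (m+k+1) * vB m = vB m * opiB (m+k+1+1) := by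
  calc opiB (m+k+1) * vB m
      = lamB 0^(m+k+2) * (sigB 0 * ((lamB 0^(k+1))⁻¹ * lamB 1)) * (lamB 0^(m+2))⁻¹ := by
        simp only [opiB_eq, vB_eq]; group
    _ = lamB 0^(m+k+2) * ((sigB 0 * lamB (k+2)) * (lamB 0^(k+1))⁻¹) * (lamB 0^(m+2))⁻¹ := by
        rw [lam_shift' (q:=1) (r:=k+2) (k+1) (by omega) (by omega)]; all_goals group
    _ = lamB 0^(m+k+2) * ((lamB (k+2) * sigB 0) * (lamB 0^(k+1))⁻¹) * (lamB 0^(m+2))⁻¹ := by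
        rw [rel7₁ (q:=0) (m:=k+2) (by omega)]; all_goals group
    _ = lamB 0^(m+1) * ((lamB 1 * lamB 0^(k+1)) * sigB 0) * (lamB 0^(m+k+3))⁻¹ := by
        rw [lam_shift (q:=1) (r:=k+2) (k+1) (by omega) (by omega)]; all_goals group
    _ = vB m * opiB (m+k+1+1) := by simp only [opiB_eq, vB_eq]; group

private lemma R6 (m : ℕ) (e : ℤ) (he : e = 1 ∨ e = -1) :
    opiB m ^ e * vB m = piB m ^ e * opiB (m+1) ^ e := by
  calc opiB m ^ e * vB m
      = lamB 0^(m+1) * (sigB 0 ^ e * lamB 1) * (lamB 0^(m+2))⁻¹ := by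
        simp only [opiB_zpow, vB_eq]; group
    _ = lamB 0^(m+1) * (lamB 0 * sigB 1 ^ e * sigB 0 ^ e) * (lamB 0^(m+2))⁻¹ := by
        rw [rel6 e (m:=0) (n:=1) he (by omega)]
    _ = piB m ^ e * opiB (m+1) ^ e := by simp only [piB_zpow, opiB_zpow]; group

private lemma R7aux (m k : ℕ) : piB (m+k+2) * piB m = piB m * piB (m+k+2) := by
  calc piB (m+k+2) * piB m
      = lamB 0^(m+k+4) * (sigB 1 * ((lamB 0^(k+2))⁻¹ * sigB 1)) * (lamB 0^(m+2))⁻¹ := by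
        simp only [piB_eq]; group
    _ = lamB 0^(m+k+4) * ((sigB 1 * sigB (k+3)) * (lamB 0^(k+2))⁻¹) * (lamB 0^(m+2))⁻¹ := by
        rw [sig_shift₁' (q:=1) (r:=k+3) (k+2) (by omega) (by omega)]; all_goals group
    _ = lamB 0^(m+k+4) * ((sigB (k+3) * sigB 1) * (lamB 0^(k+2))⁻¹) * (lamB 0^(m+2))⁻¹ := by
        rw [rel2 (m:=1) (n:=k+3) (Or.inl (by omega))]; all_goals group
    _ = lamB 0^(m+2) * ((sigB 1 * lamB 0^(k+2)) * sigB 1) * (lamB 0^(m+k+4))⁻¹ := by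
        rw [sig_shift₁ (q:=1) (r:=k+3) (k+2) (by omega) (by omega)]; all_goals group
    _ = piB m * piB (m+k+2) := by simp only [piB_eq]; group

private lemma R8 (m : ℕ) : piB m * piB (m+1) * piB m = piB (m+1) * piB m * piB (m+1) := by
  calc piB m * piB (m+1) * piB m
      = lamB 0^(m+2) * (((sigB 1 * lamB 0^1) * sigB 1) * ((lamB 0^1)⁻¹ * sigB 1)) *
          (lamB 0^(m+2))⁻¹ := by
        simp only [piB_eq]; group
    _ = lamB 0^(m+3) * ((sigB 2 * sigB 1) * sigB 2) * (lamB 0^(m+3))⁻¹ := by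
        rw [sig_shift₁ (q:=1) (r:=2) 1 (by omega) (by omega),
          sig_shift₁' (q:=1) (r:=2) 1 (by omega) (by omega)]; all_goals group
    _ = lamB 0^(m+3) * ((sigB 1 * sigB 2) * sigB 1) * (lamB 0^(m+3))⁻¹ := by
        rw [← rel3 (m:=1) (n:=2) (by omega)]; all_goals group
    _ = lamB 0^(m+3) * ((sigB 1 * (((lamB 0^1)⁻¹ * sigB 1) * lamB 0^1)) * sigB 1) *
          (lamB 0^(m+3))⁻¹ := by
        rw [sig_shift₁' (q:=1) (r:=2) 1 (by omega) (by omega)]; all_goals group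
    _ = piB (m+1) * piB m * piB (m+1) := by simp only [piB_eq]; group

private lemma R9 (m k : ℕ) : opiB (m+k+2) * piB m = piB m * opiB (m+k+2) := by
  calc opiB (m+k+2) * piB m
      = lamB 0^(m+k+3) * (sigB 0 * ((lamB 0^(k+1))⁻¹ * sigB 1)) * (lamB 0^(m+2))⁻¹ := by
        simp only [opiB_eq, piB_eq]; group
    _ = lamB 0^(m+k+3) * ((sigB 0 * sigB (k+2)) * (lamB 0^(k+1))⁻¹) * (lamB 0^(m+2))⁻¹ := by
        rw [sig_shift₁' (q:=1) (r:=k+2) (k+1) (by omega) (by omega)]; all_goals group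
    _ = lamB 0^(m+k+3) * ((sigB (k+2) * sigB 0) * (lamB 0^(k+1))⁻¹) * (lamB 0^(m+2))⁻¹ := by
        rw [rel2 (m:=0) (n:=k+2) (Or.inl (by omega))]; all_goals group
    _ = lamB 0^(m+2) * ((sigB 1 * lamB 0^(k+1)) * sigB 0) * (lamB 0^(m+k+3))⁻¹ := by
        rw [sig_shift₁ (q:=1) (r:=k+2) (k+1) (by omega) (by omega)]; all_goals group
    _ = piB m * opiB (m+k+2) := by simp only [opiB_eq, piB_eq]; group

private lemma R10 (m : ℕ) : piB m * opiB (m+1) * piB m = opiB (m+1) * piB m * opiB (m+1) := by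
  calc piB m * opiB (m+1) * piB m
      = lamB 0^(m+2) * ((sigB 1 * sigB 0) * sigB 1) * (lamB 0^(m+2))⁻¹ := by
        simp only [piB_eq, opiB_eq]; group
    _ = lamB 0^(m+2) * ((sigB 0 * sigB 1) * sigB 0) * (lamB 0^(m+2))⁻¹ := by
        rw [rel3 (m:=0) (n:=1) (by omega)]; all_goals group
    _ = opiB (m+1) * piB m * opiB (m+1) := by simp only [piB_eq, opiB_eq]; group
/-- Lemma (relations in `BV̂`): the elements `v_n`, `π_n`, `π̄_n` of `BV̂`
satisfy relations (R1)–(R10). -/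
theorem relations_in_BVhat :
    (∀ m q : ℕ, m < q → vB q * vB m = vB m * vB (q+1)) ∧
    (∀ m q : ℕ, m < q → piB q * vB m = vB m * piB (q+1)) ∧
    (∀ (m : ℕ) (e : ℤ), (e = 1 ∨ e = -1) →
      (piB m) ^ e * vB m = vB (m+1) * (piB m) ^ e * (piB (m+1)) ^ e) ∧
    (∀ m q : ℕ, q + 1 < m → piB q * vB m = vB m * piB q) ∧
    (∀ m q : ℕ, m < q → opiB q * vB m = vB m * opiB (q+1)) ∧
    (∀ (m : ℕ) (e : ℤ), (e = 1 ∨ e = -1) →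
      (opiB m) ^ e * vB m = (piB m) ^ e * (opiB (m+1)) ^ e) ∧
    (∀ m q : ℕ, m + 2 ≤ q ∨ q + 2 ≤ m → piB q * piB m = piB m * piB q) ∧
    (∀ m : ℕ, piB m * piB (m+1) * piB m = piB (m+1) * piB m * piB (m+1)) ∧
    (∀ m q : ℕ, m + 2 ≤ q → opiB q * piB m = piB m * opiB q) ∧
    (∀ m : ℕ, piB m * opiB (m+1) * piB m = opiB (m+1) * piB m * opiB (m+1)) := by
  refine ⟨?_, ?_, R3, ?_, ?_, R6, ?_, R8, ?_, R10⟩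
  · intro m q h; obtain ⟨k, rfl⟩ : ∃ k, q = m + k + 1 := ⟨q - m - 1, by omega⟩; exact R1 m k
  · intro m q h; obtain ⟨k, rfl⟩ : ∃ k, q = m + k + 1 := ⟨q - m - 1, by omega⟩; exact R2 m k
  · intro m q h; obtain ⟨k, rfl⟩ : ∃ k, m = q + k + 2 := ⟨m - q - 2, by omega⟩; exact R4 q k
  · intro m q h; obtain ⟨k, rfl⟩ : ∃ k, q = m + k + 1 := ⟨q - m - 1, by omega⟩; exact R5 m k
  · intro m q h
    rcases h with h | h
    · obtain ⟨k, rfl⟩ : ∃ k, q = m + k + 2 := ⟨q - m - 2, by omega⟩; exact R7aux m k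
    · obtain ⟨k, rfl⟩ : ∃ k, m = q + k + 2 := ⟨m - q - 2, by omega⟩; exact (R7aux q k).symm
  · intro m q h; obtain ⟨k, rfl⟩ : ∃ k, q = m + k + 2 := ⟨q - m - 2, by omega⟩; exact R9 m k

end BrinStmt3
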